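/- Let q > 0, q ≠ 1 and l > 0 a half-integer; set λ = 1 − q^{−2}. For the 2(2l+1)-dimensional spinor space with basis indexed by (component α ∈ {1,2}, weight n ∈ {−l,…,l}), the operator D with matrix blocks given by the symbols σ^{11}, σ^{12}, σ^{21}, σ^{22} of equation (7.19) — i.e. D acts on (s¹, s²) with (Ds)^α_n = ∑_β σ^{αβ}(t^l)_{n·} s^β — has, after normalisation by λ, exactly two eigenvalues on this space: q^{l+1}[l]_q and −q^{−l}[l+1]_q, where [x]_q = (q^x − q^{−x})/(q − q^{−1}). -/

import Mathlib

/-- The q-integer `[x]_q = (q^x - q^{-x})/(q - q⁻¹)`. -/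
noncomputable def qint (q x : ℝ) : ℝ := (q ^ x - q ^ (-x)) / (q - q⁻¹)

lemma rpow_split (q : ℝ) (hq : 0 < q) (a b : ℝ) (i j k : ℤ) :
    q ^ (a * (i:ℝ) + b * (j:ℝ) + (k:ℝ)) = ((q ^ a) ^ i * (q ^ b) ^ j * q ^ k : ℝ) := by
  rw [Real.rpow_add hq, Real.rpow_add hq, Real.rpow_mul hq.le, Real.rpow_mul hq.le,
    Real.rpow_intCast, Real.rpow_intCast, Real.rpow_intCast]

lemma rpow_form (q : ℝ) (hq : 0 < q) (t x e : ℝ) (i j k : ℤ) (T : ℝ)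
    (he : e = t * (i:ℝ) + x * (j:ℝ) + (k:ℝ))
    (hT : ((q ^ t) ^ i * (q ^ x) ^ j * q ^ k : ℝ) = T) : q ^ e = T := by
  rw [he, rpow_split q hq, hT]

lemma sq_ne (q : ℝ) (hq : 0 < q) (hq1 : q ≠ 1) : q^2 - 1 ≠ 0 := by
  intro h
  have h2 : (q - 1) * (q + 1) = 0 := by nlinarith [h]
  rcases mul_eq_zero.mp h2 with h | h
  · exact hq1 (by linarith)
  · linarith

lemma qsub_eq (q : ℝ) (hq : 0 < q) : q - q⁻¹ = (q^2 - 1)/q := by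
  field_simp

lemma qsub_ne (q : ℝ) (hq : 0 < q) (hq1 : q ≠ 1) : q - q⁻¹ ≠ 0 := by
  rw [qsub_eq q hq]
  exact div_ne_zero (sq_ne q hq hq1) (ne_of_gt hq)

lemma lam_eq (q : ℝ) (hq : 0 < q) : 1 - q ^ (-2:ℝ) = (q^2 - 1)/q^2 := by
  have : q ^ (-2:ℝ) = 1/q^2 := by
    rw [show (-2:ℝ) = ((-2:ℤ):ℝ) by norm_num, Real.rpow_intCast, zpow_neg, zpow_two, pow_two]
    field_simp
  rw [this]
  field_simp

lemma lam_ne (q : ℝ) (hq : 0 < q) (hq1 : q ≠ 1) : 1 - q ^ (-2:ℝ) ≠ 0 := by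
  rw [lam_eq q hq]
  exact div_ne_zero (sq_ne q hq hq1) (by positivity)

lemma qint_nonneg (q x : ℝ) (hq : 0 < q) (hx : 0 ≤ x) : 0 ≤ qint q x := by
  unfold qint
  have hinv := mul_inv_cancel₀ (ne_of_gt hq)
  rcases lt_trichotomy q 1 with h | h | h
  · apply div_nonneg_iff.mpr; right
    constructor
    · simp only [sub_nonpos]
      exact Real.rpow_le_rpow_of_exponent_ge hq h.le (by linarith)
    · nlinarith
  · simp [h]
  · apply div_nonneg
    · simp only [sub_nonneg]
      exact Real.rpow_le_rpow_of_exponent_le h.le (by linarith)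
    · nlinarith

lemma qint_pos (q x : ℝ) (hq : 0 < q) (hq1 : q ≠ 1) (hx : 0 < x) : 0 < qint q x := by
  unfold qint
  have hinv := mul_inv_cancel₀ (ne_of_gt hq)
  rcases lt_trichotomy q 1 with h | h | h
  · apply div_pos_iff.mpr; right
    constructor
    · simp only [sub_neg]
      exact Real.rpow_lt_rpow_of_exponent_gt hq h (by linarith)
    · nlinarith
  · exact absurd h hq1
  · apply div_pos
    · simp only [sub_pos]
      exact Real.rpow_lt_rpow_of_exponent_lt h (by linarith)
    · nlinarith


section Es
variable (q : ℝ) (t x : ℝ)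

lemma E1 (hq : 0 < q) : q ^ (2*t) = (q^t)^2 := by
  apply rpow_form q hq t t _ 1 1 0 _ (by push_cast; ring)
  simp only [zpow_neg, zpow_two, zpow_one, zpow_zero, pow_two]; field_simp

lemma E2 (hq : 0 < q) : q ^ (-2*t-2) = 1/((q^t)^2*q^2) := by
  apply rpow_form q hq t t _ (-1) (-1) (-2) _ (by push_cast; ring)
  have h := (Real.rpow_pos_of_pos hq t).ne'
  simp only [zpow_neg, zpow_two, zpow_one, zpow_zero, pow_two]; field_simp; try ring

lemma E3 (hq : 0 < q) : q ^ (-2*(x-t)-2) = (q^t)^2/((q^x)^2*q^2) := by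
  apply rpow_form q hq t x _ 2 (-2) (-2) _ (by push_cast; ring)
  have h := (Real.rpow_pos_of_pos hq t).ne'
  have h2 := (Real.rpow_pos_of_pos hq x).ne'
  simp only [zpow_neg, zpow_two, zpow_one, zpow_zero, pow_two]; field_simp; try ring

lemma E4 (hq : 0 < q) : q ^ ((-((x+1)-t)+1/2) + (-(x-t)-1/2)) = (q^t)^2/((q^x)^2*q) := by
  apply rpow_form q hq t x _ 2 (-2) (-1) _ (by push_cast; ring)
  have h := (Real.rpow_pos_of_pos hq t).ne'
  have h2 := (Real.rpow_pos_of_pos hq x).ne'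
  simp only [zpow_neg, zpow_two, zpow_one, zpow_zero, pow_two]; field_simp; try ring

lemma E5 (hq : 0 < q) : q ^ (x+1) = q^x*q := by
  apply rpow_form q hq x x _ 0 1 1 _ (by push_cast; ring)
  simp only [zpow_neg, zpow_two, zpow_one, zpow_zero, pow_two]; field_simp

lemma E6 (hq : 0 < q) : q ^ (-(x+1)) = 1/(q^x*q) := by
  apply rpow_form q hq x x _ 0 (-1) (-1) _ (by push_cast; ring)
  have h2 := (Real.rpow_pos_of_pos hq x).ne'
  simp only [zpow_neg, zpow_two, zpow_one, zpow_zero, pow_two]; field_simp; try ring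

lemma E7 (hq : 0 < q) : q ^ (2*t-x) = (q^t)^2/q^x := by
  apply rpow_form q hq t x _ 2 (-1) 0 _ (by push_cast; ring)
  have h2 := (Real.rpow_pos_of_pos hq x).ne'
  simp only [zpow_neg, zpow_two, zpow_one, zpow_zero, pow_two]; field_simp; try ring

lemma E8 (hq : 0 < q) : q ^ (-(2*t-x)) = q^x/(q^t)^2 := by
  apply rpow_form q hq t x _ (-2) 1 0 _ (by push_cast; ring)
  have h := (Real.rpow_pos_of_pos hq t).ne'
  simp only [zpow_neg, zpow_two, zpow_one, zpow_zero, pow_two]; field_simp; try ring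

lemma E9 (hq : 0 < q) : q ^ (-2:ℝ) = 1/q^2 := by
  rw [show (-2:ℝ) = ((-2:ℤ):ℝ) by norm_num, Real.rpow_intCast, zpow_neg, zpow_two, pow_two]
  field_simp

lemma E10 (hq : 0 < q) : q ^ (-2*(x-t)) = (q^t)^2/(q^x)^2 := by
  apply rpow_form q hq t x _ 2 (-2) 0 _ (by push_cast; ring)
  have h2 := (Real.rpow_pos_of_pos hq x).ne'
  simp only [zpow_neg, zpow_two, zpow_one, zpow_zero, pow_two]; field_simp; try ring

lemma E11 (hq : 0 < q) : q ^ ((-(x-t)+1/2) + (-((x-1)-t)-1/2)) = (q^t)^2*q/(q^x)^2 := by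
  apply rpow_form q hq t x _ 2 (-2) 1 _ (by push_cast; ring)
  have h2 := (Real.rpow_pos_of_pos hq x).ne'
  simp only [zpow_neg, zpow_two, zpow_one, zpow_zero, pow_two]; field_simp; try ring

lemma E12 (hq : 0 < q) : q ^ (2*t-x+1) = (q^t)^2*q/q^x := by
  apply rpow_form q hq t x _ 2 (-1) 1 _ (by push_cast; ring)
  have h2 := (Real.rpow_pos_of_pos hq x).ne'
  simp only [zpow_neg, zpow_two, zpow_one, zpow_zero, pow_two]; field_simp; try ring

lemma E13 (hq : 0 < q) : q ^ (-(2*t-x+1)) = q^x/((q^t)^2*q) := by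
  apply rpow_form q hq t x _ (-2) 1 (-1) _ (by push_cast; ring)
  have h := (Real.rpow_pos_of_pos hq t).ne'
  have h2 := (Real.rpow_pos_of_pos hq x).ne'
  simp only [zpow_neg, zpow_two, zpow_one, zpow_zero, pow_two]; field_simp; try ring

lemma E14 (hq : 0 < q) : q ^ (-x) = 1/q^x := by
  rw [Real.rpow_neg hq.le]; field_simp

end Es

lemma merge_bc (q : ℝ) (hq : 0 < q) (e1 e2 c s : ℝ) :
    (q^e1 * c * s) * (q^e2 * c * s) = q^(e1+e2) * c^2 * (s*s) := by
  rw [Real.rpow_add hq]; ring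

lemma quad1 (v a q : ℝ) (hv : v ≠ 0) (ha : a ≠ 0) (hq : q ≠ 0) (hd : q^2 - 1 ≠ 0) :
  (v^2 + 1/(v^2*q^2) - v^2/(a^2*q^2) - 1)^2
    + v^2/(a^2*q) * ((q^2-1)/q^2)^2 * ((a*q - 1/(a*q))/((q^2-1)/q) * ((v^2/a - a/v^2)/((q^2-1)/q)))
  = (v^2 + 1/(v^2*q^2) - 2) * (v^2 + 1/(v^2*q^2) - v^2/(a^2*q^2) - 1) + (v^2 + 1/(v^2*q^2) - 1 - 1/q^2) := by
  have hb : v^2/(a^2*q) * ((q^2-1)/q^2)^2 * ((a*q - 1/(a*q))/((q^2-1)/q) * ((v^2/a - a/v^2)/((q^2-1)/q)))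
      = v^4/(a^2*q^2) - 1/q^2 - v^4/(a^4*q^4) + 1/(a^2*q^4) := by
    field_simp
    ring
  rw [hb]
  field_simp
  ring

lemma quad2 (v a q : ℝ) (hv : v ≠ 0) (ha : a ≠ 0) (hq : q ≠ 0) (hd : q^2 - 1 ≠ 0) :
  (v^2*q/(a^2) * ((q^2-1)/q^2)^2 * ((v^2*q/a - a/(v^2*q))/((q^2-1)/q) * ((a - 1/a)/((q^2-1)/q))))
    + (v^2/a^2 - 1)^2
  = (v^2 + 1/(v^2*q^2) - 2) * (v^2/a^2 - 1) + (v^2 + 1/(v^2*q^2) - 1 - 1/q^2) := by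
  have hb : (v^2*q/(a^2) * ((q^2-1)/q^2)^2 * ((v^2*q/a - a/(v^2*q))/((q^2-1)/q) * ((a - 1/a)/((q^2-1)/q))))
      = v^4/a^2 - 1/q^2 - v^4/a^4 + 1/(a^2*q^2) := by
    field_simp
    ring
  rw [hb]
  field_simp
  ring

/-- diagonal 11-block identity for `j < n`. -/
lemma key1 (q l x : ℝ) (hq : 0 < q) (hq1 : q ≠ 1) (h0 : 0 ≤ x) (h1 : x + 1 ≤ 2 * l) :
    (q ^ (2*l) + q ^ (-2*l-2) - q ^ (-2*(x-l)-2) - 1)^2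
      + (q ^ (-((x+1)-l)+1/2) * (1 - q ^ (-2:ℝ)) * Real.sqrt (qint q (l+((x+1)-l)) * qint q (l-((x+1)-l)+1)))
        * (q ^ (-(x-l)-1/2) * (1 - q ^ (-2:ℝ)) * Real.sqrt (qint q (l-(x-l)) * qint q (l+(x-l)+1)))
      = (q ^ (2*l) + q ^ (-2*l-2) - 2) * (q ^ (2*l) + q ^ (-2*l-2) - q ^ (-2*(x-l)-2) - 1)
        + (q ^ (2*l) + q ^ (-2*l-2) - 1 - q ^ (-2:ℝ)) := by
  have hqe : q ≠ 0 := ne_of_gt hq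
  have hsq := sq_ne q hq hq1
  have hv : (q:ℝ) ^ l ≠ 0 := (Real.rpow_pos_of_pos hq l).ne'
  have ha : (q:ℝ) ^ x ≠ 0 := (Real.rpow_pos_of_pos hq x).ne'
  rw [show l+((x+1)-l) = x+1 by ring, show l-((x+1)-l)+1 = 2*l-x by ring,
    show l-(x-l) = 2*l-x by ring, show l+(x-l)+1 = x+1 by ring]
  have hP : 0 ≤ qint q (x+1) * qint q (2*l-x) :=
    mul_nonneg (qint_nonneg q _ hq (by linarith)) (qint_nonneg q _ hq (by linarith))
  rw [mul_comm (qint q (2*l-x))]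
  rw [merge_bc q hq, Real.mul_self_sqrt hP]
  unfold qint
  rw [lam_eq q hq, qsub_eq q hq, E4 q l x hq, E5 q x hq, E6 q x hq, E7 q l x hq, E8 q l x hq,
    E3 q l x hq, E2 q l hq, E9 q hq, E1 q l hq]
  exact quad1 _ _ _ hv ha hqe hsq

/-- diagonal 22-block identity for `1 ≤ j`. -/
lemma key2 (q l x : ℝ) (hq : 0 < q) (hq1 : q ≠ 1) (h0 : 1 ≤ x) (h1 : x ≤ 2 * l) :
    (q ^ (-((x-1)-l)-1/2) * (1 - q ^ (-2:ℝ)) * Real.sqrt (qint q (l-((x-1)-l)) * qint q (l+((x-1)-l)+1)))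
      * (q ^ (-(x-l)+1/2) * (1 - q ^ (-2:ℝ)) * Real.sqrt (qint q (l+(x-l)) * qint q (l-(x-l)+1)))
      + (q ^ (-2*(x-l)) - 1)^2
      = (q ^ (2*l) + q ^ (-2*l-2) - 2) * (q ^ (-2*(x-l)) - 1)
        + (q ^ (2*l) + q ^ (-2*l-2) - 1 - q ^ (-2:ℝ)) := by
  have hqe : q ≠ 0 := ne_of_gt hq
  have hsq := sq_ne q hq hq1
  have hv : (q:ℝ) ^ l ≠ 0 := (Real.rpow_pos_of_pos hq l).ne'
  have ha : (q:ℝ) ^ x ≠ 0 := (Real.rpow_pos_of_pos hq x).ne'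
  rw [show l-((x-1)-l) = 2*l-x+1 by ring, show l+((x-1)-l)+1 = x by ring,
    show l+(x-l) = x by ring, show l-(x-l)+1 = 2*l-x+1 by ring]
  have hP : 0 ≤ qint q (2*l-x+1) * qint q x :=
    mul_nonneg (qint_nonneg q _ hq (by linarith)) (qint_nonneg q _ hq (by linarith))
  rw [mul_comm (qint q x) (qint q (2*l-x+1))]
  rw [merge_bc q hq, Real.mul_self_sqrt hP]
  unfold qint
  rw [show (-((x-1)-l)-1/2) + (-(x-l)+1/2) = (-(x-l)+1/2) + (-((x-1)-l)-1/2) by ring]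
  rw [lam_eq q hq, qsub_eq q hq, E11 q l x hq, E12 q l x hq, E13 q l x hq, E14 q x hq,
    E10 q l x hq, E2 q l hq, E9 q hq, E1 q l hq]
  have := quad2 (q^l) (q^x) q hv ha hqe hsq
  calc _ = (q ^ l) ^ 2 * q / ((q ^ x) ^ 2) * ((q ^ 2 - 1) / q ^ 2) ^ 2 *
        (((q ^ l) ^ 2 * q / q ^ x - q ^ x / ((q ^ l) ^ 2 * q)) / ((q ^ 2 - 1) / q) *
          ((q ^ x - 1 / q ^ x) / ((q ^ 2 - 1) / q))) + ((q ^ l) ^ 2 / (q ^ x) ^ 2 - 1) ^ 2 := by ring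
    _ = _ := this

/-- boundary 11 identity. -/
lemma keyA (q l : ℝ) (hq : 0 < q) (hq1 : q ≠ 1) :
    (q ^ (2*l) + q ^ (-2*l-2) - q ^ (-2*l-2) - 1)^2
      = (q ^ (2*l) + q ^ (-2*l-2) - 2) * (q ^ (2*l) + q ^ (-2*l-2) - q ^ (-2*l-2) - 1)
        + (q ^ (2*l) + q ^ (-2*l-2) - 1 - q ^ (-2:ℝ)) := by
  have hqe : q ≠ 0 := ne_of_gt hq
  have hsq := sq_ne q hq hq1
  have hv : (q:ℝ) ^ l ≠ 0 := (Real.rpow_pos_of_pos hq l).ne'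
  rw [E1 q l hq, E2 q l hq, E9 q hq]
  field_simp
  ring

/-- boundary 22 identity. -/
lemma keyB (q l : ℝ) (hq : 0 < q) (hq1 : q ≠ 1) :
    (q ^ (2*l) - 1)^2
      = (q ^ (2*l) + q ^ (-2*l-2) - 2) * (q ^ (2*l) - 1)
        + (q ^ (2*l) + q ^ (-2*l-2) - 1 - q ^ (-2:ℝ)) := by
  have hqe : q ≠ 0 := ne_of_gt hq
  have hsq := sq_ne q hq hq1
  have hv : (q:ℝ) ^ l ≠ 0 := (Real.rpow_pos_of_pos hq l).ne'
  rw [E1 q l hq, E2 q l hq, E9 q hq]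
  field_simp
  ring

noncomputable def Dm (q : ℝ) (n : ℕ) : Matrix (Fin 2 × Fin (n + 1)) (Fin 2 × Fin (n + 1)) ℝ :=
  Matrix.of fun p r =>
    if p.1 = 0 ∧ r.1 = 0 then
      (if p.2 = r.2 then
          q ^ (2 * ((n:ℝ)/2)) + q ^ (-2 * ((n:ℝ)/2) - 2) - q ^ (-2 * (((r.2 : ℕ) : ℝ) - ((n:ℝ)/2)) - 2) - 1
        else 0)
    else if p.1 = 0 ∧ r.1 = 1 then
      (if (p.2 : ℕ) + 1 = (r.2 : ℕ) then
          q ^ (-(((r.2 : ℕ) : ℝ) - ((n:ℝ)/2)) + 1 / 2) * (1 - q ^ (-2:ℝ)) *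
            Real.sqrt (qint q (((n:ℝ)/2) + (((r.2 : ℕ) : ℝ) - ((n:ℝ)/2))) *
              qint q (((n:ℝ)/2) - (((r.2 : ℕ) : ℝ) - ((n:ℝ)/2)) + 1))
        else 0)
    else if p.1 = 1 ∧ r.1 = 0 then
      (if (p.2 : ℕ) = (r.2 : ℕ) + 1 then
          q ^ (-(((r.2 : ℕ) : ℝ) - ((n:ℝ)/2)) - 1 / 2) * (1 - q ^ (-2:ℝ)) *
            Real.sqrt (qint q (((n:ℝ)/2) - (((r.2 : ℕ) : ℝ) - ((n:ℝ)/2))) *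
              qint q (((n:ℝ)/2) + (((r.2 : ℕ) : ℝ) - ((n:ℝ)/2)) + 1))
        else 0)
    else (if p.2 = r.2 then q ^ (-2 * (((r.2 : ℕ) : ℝ) - ((n:ℝ)/2))) - 1 else 0)

lemma sum_succ {n : ℕ} (g : Fin (n+1) → ℝ) (j : Fin (n+1)) :
    (∑ s : Fin (n+1), if (j:ℕ)+1 = (s:ℕ) then g s else 0)
      = if h : (j:ℕ) < n then g ⟨(j:ℕ)+1, by omega⟩ else 0 := by
  split_ifs with h
  · rw [Finset.sum_eq_single (⟨(j:ℕ)+1, by omega⟩ : Fin (n+1))]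
    · simp
    · intro s _ hs
      rw [if_neg]
      intro hc
      exact hs (Fin.ext hc.symm)
    · intro h'; exact absurd (Finset.mem_univ _) h'
  · apply Finset.sum_eq_zero
    intro s _
    rw [if_neg]
    have := s.isLt
    omega

lemma sum_pred {n : ℕ} (g : Fin (n+1) → ℝ) (j : Fin (n+1)) :
    (∑ s : Fin (n+1), if (j:ℕ) = (s:ℕ)+1 then g s else 0)
      = if h : 0 < (j:ℕ) then g ⟨(j:ℕ)-1, by omega⟩ else 0 := by
  have hj := j.isLt
  split_ifs with h
  · rw [Finset.sum_eq_single (⟨(j:ℕ)-1, by omega⟩ : Fin (n+1))]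
    · rw [if_pos]
      simp only [Fin.val_mk]
      omega
    · intro s _ hs
      rw [if_neg]
      intro hc
      apply hs (Fin.ext _)
      simp only [Fin.val_mk]
      omega
    · intro h'; exact absurd (Finset.mem_univ _) h'
  · apply Finset.sum_eq_zero
    intro s _
    rw [if_neg]
    omega

lemma sum_succ' {n : ℕ} (g : Fin (n+1) → ℝ) (k : Fin (n+1)) :
    (∑ s : Fin (n+1), if (s:ℕ) = (k:ℕ)+1 then g s else 0)
      = if h : (k:ℕ) < n then g ⟨(k:ℕ)+1, by omega⟩ else 0 := by
  split_ifs with h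
  · rw [Finset.sum_eq_single (⟨(k:ℕ)+1, by omega⟩ : Fin (n+1))]
    · simp
    · intro s _ hs
      rw [if_neg]
      intro hc
      exact hs (Fin.ext hc)
    · intro h'; exact absurd (Finset.mem_univ _) h'
  · apply Finset.sum_eq_zero
    intro s _
    rw [if_neg]
    have := s.isLt
    omega

lemma sum_pred' {n : ℕ} (g : Fin (n+1) → ℝ) (k : Fin (n+1)) :
    (∑ s : Fin (n+1), if (s:ℕ)+1 = (k:ℕ) then g s else 0)
      = if h : 0 < (k:ℕ) then g ⟨(k:ℕ)-1, by omega⟩ else 0 := by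
  have hk := k.isLt
  split_ifs with h
  · rw [Finset.sum_eq_single (⟨(k:ℕ)-1, by omega⟩ : Fin (n+1))]
    · rw [if_pos]
      simp only [Fin.val_mk]
      omega
    · intro s _ hs
      rw [if_neg]
      intro hc
      apply hs (Fin.ext _)
      simp only [Fin.val_mk]
      omega
    · intro h'; exact absurd (Finset.mem_univ _) h'
  · apply Finset.sum_eq_zero
    intro s _
    rw [if_neg]
    omega

lemma Dkey (q : ℝ) (hq : 0 < q) (hq1 : q ≠ 1) (n : ℕ) (p r : Fin 2 × Fin (n+1)) :
    ∑ s, Dm q n p s * Dm q n s r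
      = (q ^ (2*((n:ℝ)/2)) + q ^ (-2*((n:ℝ)/2)-2) - 2) * Dm q n p r
        + (q ^ (2*((n:ℝ)/2)) + q ^ (-2*((n:ℝ)/2)-2) - 1 - q ^ (-2:ℝ)) * (if p = r then 1 else 0) := by
  obtain ⟨a, j⟩ := p
  obtain ⟨c, k⟩ := r
  rw [Fintype.sum_prod_type, Fin.sum_univ_two]
  fin_cases a <;> fin_cases c <;>
    simp only [Dm, Matrix.of_apply, Prod.mk.injEq, Fin.isValue, Fin.mk_zero, Fin.mk_one,
      zero_ne_one, one_ne_zero, and_true, true_and, and_false, false_and, and_self,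
      if_true, if_false, ite_true, ite_false]
  -- case (0,j) (0,k)
  · simp only [ite_mul, zero_mul, mul_ite, mul_zero]
    rw [Finset.sum_ite_eq', if_pos (Finset.mem_univ k), sum_succ']
    by_cases hjk : j = k
    · subst hjk
      rw [if_pos rfl, if_pos rfl, if_pos rfl]
      by_cases hj : (j:ℕ) < n
      · rw [dif_pos hj, if_pos (by simp only [Fin.val_mk])]
        have hx1 : ((j:ℕ):ℝ) + 1 ≤ 2*((n:ℝ)/2) := by
          have : ((j:ℕ):ℝ) + 1 ≤ (n:ℝ) := by exact_mod_cast hj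
          linarith
        have hk2 := key1 q ((n:ℝ)/2) ((j:ℕ):ℝ) hq hq1 (by positivity) hx1
        rw [mul_one, ← pow_two]
        push_cast
        convert hk2 using 3
      · rw [dif_neg hj]
        have hjn : (j:ℕ) = n := by omega
        rw [mul_one, add_zero, ← pow_two, show ((j:ℕ):ℝ) = (n:ℝ) by rw [hjn],
          show -2*((n:ℝ) - (n:ℝ)/2) - 2 = -2*((n:ℝ)/2)-2 by ring]
        exact keyA q ((n:ℝ)/2) hq hq1
    · rw [if_neg hjk, if_neg hjk, if_neg hjk, zero_add]
      split_ifs with h1 h2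
      · exfalso
        apply hjk
        apply Fin.ext
        simp only [Fin.val_mk] at h2
        omega
      · ring
      · ring
  -- case (0,j) (1,k)
  · simp only [ite_mul, zero_mul, mul_ite, mul_zero]
    rw [Finset.sum_ite_eq', if_pos (Finset.mem_univ k), sum_pred']
    by_cases hk : (j:ℕ)+1 = (k:ℕ)
    · rw [if_pos hk, if_pos hk]
      have hk0 : 0 < (k:ℕ) := by omega
      rw [dif_pos hk0, if_pos (by apply Fin.ext; simp only [Fin.val_mk]; omega)]
      have hcast : (((k:ℕ)-1 : ℕ):ℝ) = ((k:ℕ):ℝ) - 1 := by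
        rw [Nat.cast_sub hk0]; norm_num
      simp only [Fin.val_mk]
      rw [add_zero, hcast,
        show -2*((((k:ℕ):ℝ)-1) - (n:ℝ)/2) - 2 = -2*(((k:ℕ):ℝ) - (n:ℝ)/2) by ring]
      ring
    · rw [if_neg hk, if_neg hk, add_zero]
      split_ifs with h1 h2
      · exfalso
        apply hk
        have := congrArg Fin.val h2
        simp only [Fin.val_mk] at this
        omega
      · ring
      · ring
  -- case (1,j) (0,k)
  · simp only [ite_mul, zero_mul, mul_ite, mul_zero]
    rw [Finset.sum_ite_eq', if_pos (Finset.mem_univ k), sum_succ']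
    by_cases hk : (j:ℕ) = (k:ℕ)+1
    · rw [if_pos hk, if_pos hk]
      have hkn : (k:ℕ) < n := by have := j.isLt; omega
      rw [dif_pos hkn, if_pos (by apply Fin.ext; simp only [Fin.val_mk]; omega)]
      simp only [Fin.val_mk]
      rw [add_zero]
      push_cast
      rw [show -2*((((k:ℕ):ℝ)+1) - (n:ℝ)/2) = -2*(((k:ℕ):ℝ) - (n:ℝ)/2) - 2 by ring]
      ring
    · rw [if_neg hk, if_neg hk, add_zero]
      split_ifs with h1 h2
      · exfalso
        apply hk
        have := congrArg Fin.val h2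
        simp only [Fin.val_mk] at this
        omega
      · ring
      · ring
  -- case (1,j) (1,k)
  · simp only [ite_mul, zero_mul, mul_ite, mul_zero]
    rw [Finset.sum_ite_eq', if_pos (Finset.mem_univ k), sum_pred']
    by_cases hjk : j = k
    · subst hjk
      simp only [eq_self_iff_true, if_true]
      by_cases hj : 0 < (j:ℕ)
      · rw [dif_pos hj, if_pos (by first | omega | (simp only [Fin.val_mk]; omega))]
        have hcast : (((j:ℕ)-1 : ℕ):ℝ) = ((j:ℕ):ℝ) - 1 := by
          rw [Nat.cast_sub hj]; norm_num
        have hx1 : ((j:ℕ):ℝ) ≤ 2*((n:ℝ)/2) := by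
          have : ((j:ℕ):ℝ) ≤ (n:ℝ) := by exact_mod_cast (by omega : (j:ℕ) ≤ n)
          linarith
        have hk2 := key2 q ((n:ℝ)/2) ((j:ℕ):ℝ) hq hq1 (by exact_mod_cast hj) hx1
        try simp only [Fin.val_mk]
        try rw [mul_one]
        rw [hcast, ← pow_two]
        convert hk2 using 3
      · rw [dif_neg hj, zero_add, ← pow_two]
        try rw [mul_one]
        have hjn : (j:ℕ) = 0 := by omega
        rw [show ((j:ℕ):ℝ) = 0 by rw [hjn]; norm_num,
          show -2*((0:ℝ) - (n:ℝ)/2) = 2*((n:ℝ)/2) by ring]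
        exact keyB q ((n:ℝ)/2) hq hq1
    · rw [if_neg hjk, if_neg hjk, if_neg hjk, add_zero]
      split_ifs with h1 h2
      · exfalso
        apply hjk
        apply Fin.ext
        simp only [Fin.val_mk] at h2
        omega
      · ring
      · ring

lemma mu_sum (q l : ℝ) (hq : 0 < q) (hq1 : q ≠ 1) :
    (1 - q ^ (-2:ℝ)) * (q^(l+1) * qint q l + -(q^(-l) * qint q (l+1)))
      = q^(2*l) + q^(-2*l-2) - 2 := by
  have hqe : q ≠ 0 := ne_of_gt hq
  have hsq := sq_ne q hq hq1
  have hv : q ^ l ≠ 0 := (Real.rpow_pos_of_pos hq l).ne'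
  unfold qint
  rw [lam_eq q hq, qsub_eq q hq, E5 q l hq, E6 q l hq, E14 q l hq, E1 q l hq, E2 q l hq]
  field_simp
  ring

lemma mu_prod (q l : ℝ) (hq : 0 < q) (hq1 : q ≠ 1) :
    (1 - q ^ (-2:ℝ))^2 * ((q^(l+1) * qint q l) * -(q^(-l) * qint q (l+1)))
      = -(q^(2*l) + q^(-2*l-2) - 1 - q^(-2:ℝ)) := by
  have hqe : q ≠ 0 := ne_of_gt hq
  have hsq := sq_ne q hq hq1
  have hv : q ^ l ≠ 0 := (Real.rpow_pos_of_pos hq l).ne'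
  unfold qint
  rw [lam_eq q hq, qsub_eq q hq, E5 q l hq, E6 q l hq, E14 q l hq, E1 q l hq, E2 q l hq,
    E9 q hq]
  field_simp
  ring

lemma lam_mu1 (q l : ℝ) (hq : 0 < q) (hq1 : q ≠ 1) :
    (1 - q ^ (-2:ℝ)) * (q^(l+1) * qint q l) = q^(2*l) - 1 := by
  have hqe : q ≠ 0 := ne_of_gt hq
  have hsq := sq_ne q hq hq1
  have hv : q ^ l ≠ 0 := (Real.rpow_pos_of_pos hq l).ne'
  unfold qint
  rw [lam_eq q hq, qsub_eq q hq, E5 q l hq, E14 q l hq, E1 q l hq]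
  field_simp

lemma key_ne (q l : ℝ) (hq : 0 < q) (hq1 : q ≠ 1) (hl : 0 < l) :
    q^(2*l) + q^(-2*l-2) - q^(2*l-2) - 1 ≠ q^(2*l) - 1 := by
  intro h
  have hEq : q^(-2*l-2) = q^(2*l-2) := by linarith
  rcases lt_trichotomy q 1 with h1 | h1 | h1
  · have := (Real.rpow_lt_rpow_left_iff_of_base_lt_one hq h1).mpr
      (show -2*l-2 < 2*l-2 by linarith)
    linarith [hEq]
  · exact hq1 h1
  · have := (Real.rpow_lt_rpow_left_iff h1).mpr (show -2*l-2 < 2*l-2 by linarith)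
    linarith [hEq]


/-- Section 7.4: the block operator `D` on the `2(2l+1)`-dimensional spinor space,
with blocks the symbols `σ^{11}, σ^{12}, σ^{21}, σ^{22}` of (7.19) (here `l = n/2 > 0`,
weights `m = j − l ∈ {−l,…,l}`, `λ = 1 − q^{−2}`), has after normalisation by `λ`
exactly the two eigenvalues `q^{l+1}[l]_q` and `−q^{−l}[l+1]_q`, and is diagonalisable. -/
theorem dirac_4D_eigenvalues (q : ℝ) (hq : 0 < q) (hq1 : q ≠ 1) (n : ℕ) (hn : 1 ≤ n) :
    let l : ℝ := (n : ℝ) / 2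
    let lam : ℝ := 1 - q ^ (-2 : ℝ)
    let D : Matrix (Fin 2 × Fin (n + 1)) (Fin 2 × Fin (n + 1)) ℝ :=
      Matrix.of fun p r =>
        if p.1 = 0 ∧ r.1 = 0 then
          (if p.2 = r.2 then
              q ^ (2 * l) + q ^ (-2 * l - 2) - q ^ (-2 * (((r.2 : ℕ) : ℝ) - l) - 2) - 1
            else 0)
        else if p.1 = 0 ∧ r.1 = 1 then
          (if (p.2 : ℕ) + 1 = (r.2 : ℕ) then
              q ^ (-(((r.2 : ℕ) : ℝ) - l) + 1 / 2) * lam *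
                Real.sqrt (qint q (l + (((r.2 : ℕ) : ℝ) - l)) *
                  qint q (l - (((r.2 : ℕ) : ℝ) - l) + 1))
            else 0)
        else if p.1 = 1 ∧ r.1 = 0 then
          (if (p.2 : ℕ) = (r.2 : ℕ) + 1 then
              q ^ (-(((r.2 : ℕ) : ℝ) - l) - 1 / 2) * lam *
                Real.sqrt (qint q (l - (((r.2 : ℕ) : ℝ) - l)) *
                  qint q (l + (((r.2 : ℕ) : ℝ) - l) + 1))
            else 0)
        else (if p.2 = r.2 then q ^ (-2 * (((r.2 : ℕ) : ℝ) - l)) - 1 else 0)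
    (∀ μ : ℝ,
        Module.End.HasEigenvalue (Matrix.toLin' (lam⁻¹ • D)) μ ↔
          (μ = q ^ (l + 1) * qint q l ∨ μ = -(q ^ (-l) * qint q (l + 1)))) ∧
      (⨆ μ : ℝ, Module.End.eigenspace (Matrix.toLin' (lam⁻¹ • D)) μ) = ⊤ := by
  intro l lam D
  have hD : D = Dm q n := rfl
  have hl : (0:ℝ) < l := by
    have : (1:ℝ) ≤ (n:ℝ) := by exact_mod_cast hn
    unfold l
    linarith
  have hlam0 : lam ≠ 0 := lam_ne q hq hq1
  set μ1 : ℝ := q ^ (l + 1) * qint q l with hμ1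
  set μ2 : ℝ := -(q ^ (-l) * qint q (l + 1)) with hμ2
  set c1 : ℝ := q^(2*((n:ℝ)/2)) + q^(-2*((n:ℝ)/2)-2) - 2 with hc1
  set c0 : ℝ := q^(2*((n:ℝ)/2)) + q^(-2*((n:ℝ)/2)-2) - 1 - q^(-2:ℝ) with hc0
  have hsum : lam * (μ1 + μ2) = c1 := mu_sum q l hq hq1
  have hprod : lam^2 * (μ1 * μ2) = -c0 := mu_prod q l hq hq1
  have hμ1pos : 0 < μ1 :=
    mul_pos (Real.rpow_pos_of_pos hq _) (qint_pos q l hq hq1 hl)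
  have hμ2neg : μ2 < 0 := by
    have : 0 < q ^ (-l) * qint q (l + 1) :=
      mul_pos (Real.rpow_pos_of_pos hq _) (qint_pos q (l+1) hq hq1 (by linarith))
    rw [hμ2]; linarith
  have hμne : μ1 ≠ μ2 := by linarith
  set f := Matrix.toLin' (lam⁻¹ • D) with hfdef
  have hf : ∀ v, f v = lam⁻¹ • D.mulVec v := by
    intro v
    rw [hfdef, Matrix.toLin'_apply, Matrix.smul_mulVec]
  have hDD : ∀ v : (Fin 2 × Fin (n+1)) → ℝ,
      D.mulVec (D.mulVec v) = c1 • D.mulVec v + c0 • v := by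
    intro v
    rw [Matrix.mulVec_mulVec]
    have hM : D * D = c1 • D + c0 • (1 : Matrix (Fin 2 × Fin (n+1)) (Fin 2 × Fin (n+1)) ℝ) := by
      ext p r
      rw [Matrix.mul_apply, Matrix.add_apply, Matrix.smul_apply, Matrix.smul_apply,
        Matrix.one_apply, smul_eq_mul, smul_eq_mul, hD]
      exact Dkey q hq hq1 n p r
    rw [hM, Matrix.add_mulVec, Matrix.smul_mulVec, Matrix.smul_mulVec,
      Matrix.one_mulVec]
  have hquad : ∀ v, f (f v) = (μ1 + μ2) • f v - (μ1 * μ2) • v := by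
    intro v
    rw [hf, hf, Matrix.mulVec_smul, hDD v]
    match_scalars
    · rw [← hsum]; field_simp; try ring
    · have : c0 = -(lam^2 * (μ1*μ2)) := by linarith
      rw [this]; field_simp; try ring
  have heig : ∀ μ : ℝ, ∀ v, v ≠ 0 → f v = μ • v → (μ - μ1) * (μ - μ2) = 0 := by
    intro μ v hv0 hv
    have h := hquad v
    rw [hv, map_smul, hv] at h
    have h0 : (μ * μ - ((μ1+μ2)*μ - μ1*μ2)) • v = 0 := by
      rw [sub_smul, sub_smul, ← smul_smul, ← smul_smul, h]
      abel
    rcases smul_eq_zero.mp h0 with h1 | h1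
    · linear_combination h1
    · exact absurd h1 hv0
  constructor
  · intro μ
    constructor
    · intro hev
      obtain ⟨v, hv⟩ := hev.exists_hasEigenvector
      have := heig μ v hv.2 (hv.apply_eq_smul)
      rcases mul_eq_zero.mp this with h | h
      · left; have := sub_eq_zero.mp h; rw [this]
      · right; have := sub_eq_zero.mp h; rw [this]
    · intro hμ
      rcases hμ with hμ | hμ
      · -- eigenvector Pi.single (0, n)
        subst hμ
        set p0 : Fin 2 × Fin (n+1) := ((0 : Fin 2), (⟨n, n.lt_succ_self⟩ : Fin (n+1))) with hp0
        set w : (Fin 2 × Fin (n+1)) → ℝ := Pi.single p0 1 with hw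
        have hlval : l = (n:ℝ)/2 := rfl
        have hlm : lam * μ1 = q^(2*l) - 1 := by
          rw [hμ1]; exact lam_mu1 q l hq hq1
        have hDw : D.mulVec w = (lam * μ1) • w := by
          rw [hw, Matrix.mulVec_single_one, hD]
          funext p
          obtain ⟨a, i⟩ := p
          rw [Matrix.col_apply, Pi.smul_apply, Pi.single_apply, smul_eq_mul]
          fin_cases a <;>
            simp only [Dm, hp0, Matrix.of_apply, Fin.isValue, Fin.mk_zero, Fin.mk_one,
              zero_ne_one, one_ne_zero, and_true, true_and, and_false, false_and, and_self,
              if_true, if_false, ite_true, ite_false, mul_one]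
          · by_cases hi : i = (⟨n, n.lt_succ_self⟩ : Fin (n+1))
            · rw [if_pos hi, if_pos (by rw [hi]), mul_one]
              try simp only [Fin.val_mk]
              rw [show -2*(((n:ℕ):ℝ) - (n:ℝ)/2) - 2 = -2*l - 2 by rw [hlval]; push_cast; ring,
                show (2*((n:ℝ)/2) : ℝ) = 2*l by rw [hlval],
                show (-2*((n:ℝ)/2)-2 : ℝ) = -2*l-2 by rw [hlval]]
              linarith [hlm]
            · rw [if_neg hi, if_neg (by intro hc; exact hi (congrArg Prod.snd hc)), mul_zero]
          · rw [if_neg (by intro hc; have := i.isLt; omega),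
              if_neg (by intro hc; exact one_ne_zero (congrArg Prod.fst hc)), mul_zero]
        have hfw : f w = μ1 • w := by
          rw [hf, hDw, smul_smul, inv_mul_cancel_left₀ hlam0]
        have hw0 : w ≠ 0 := by
          intro hc
          have := congrFun hc p0
          rw [hw] at this
          simp [Pi.single_apply] at this
        exact Module.End.hasEigenvalue_of_hasEigenvector
          ⟨Module.End.mem_eigenspace_iff.mpr hfw, hw0⟩
      · subst hμ
        by_contra hne
        have hbot : Module.End.eigenspace f μ2 = ⊥ := not_not.mp hne
        set p0 : Fin 2 × Fin (n+1) := ((0 : Fin 2), (⟨0, by omega⟩ : Fin (n+1))) with hp0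
        set w : (Fin 2 × Fin (n+1)) → ℝ := Pi.single p0 1 with hw
        have hlval : l = (n:ℝ)/2 := rfl
        have hu : f (f w - μ1 • w) = μ2 • (f w - μ1 • w) := by
          rw [map_sub, map_smul, hquad w]
          module
        have hu0 : f w - μ1 • w = 0 := by
          have hmem := Module.End.mem_eigenspace_iff.mpr hu
          rw [hbot] at hmem
          exact (Submodule.mem_bot ℝ).mp hmem
        have hDent : Dm q n p0 p0 = q^(2*l) + q^(-2*l-2) - q^(2*l-2) - 1 := by
          simp only [Dm, Matrix.of_apply, hp0, Fin.isValue, and_self, if_true, ite_true,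
            eq_self_iff_true, Fin.val_mk, Nat.cast_zero]
          rw [show -2*((0:ℝ) - (n:ℝ)/2) - 2 = 2*((n:ℝ)/2) - 2 by ring, ← hlval]
        have hval : f w p0 = lam⁻¹ * (Dm q n p0 p0) := by
          rw [hf, Pi.smul_apply, smul_eq_mul, hD, hw, Matrix.mulVec_single_one]
          rfl
        have hcoord := congrFun hu0 p0
        rw [Pi.sub_apply, Pi.smul_apply, Pi.zero_apply, smul_eq_mul, hval, hw,
          Pi.single_eq_same, mul_one, hDent] at hcoord
        have hA : q^(2*l) + q^(-2*l-2) - q^(2*l-2) - 1 = q^(2*l) - 1 := by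
          have hlm : lam * μ1 = q^(2*l) - 1 := by
            rw [hμ1]; exact lam_mu1 q l hq hq1
          have h1 : lam⁻¹ * (q^(2*l) + q^(-2*l-2) - q^(2*l-2) - 1) = μ1 := by linarith
          have h2 : q^(2*l) + q^(-2*l-2) - q^(2*l-2) - 1 = lam * μ1 := by
            rw [← h1]
            field_simp
          linarith [hlm]
        exact key_ne q l hq hq1 hl hA
  · -- diagonalisable
    rw [eq_top_iff]
    rintro x -
    have hx1 : f x - μ2 • x ∈ Module.End.eigenspace f μ1 := by
      apply Module.End.mem_eigenspace_iff.mpr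
      rw [map_sub, map_smul, hquad x]
      module
    have hx2 : μ1 • x - f x ∈ Module.End.eigenspace f μ2 := by
      apply Module.End.mem_eigenspace_iff.mpr
      rw [map_sub, map_smul, hquad x]
      module
    have hxeq : x = (μ1-μ2)⁻¹ • (f x - μ2 • x) + (μ1-μ2)⁻¹ • (μ1 • x - f x) := by
      rw [← smul_add, show (f x - μ2 • x) + (μ1 • x - f x) = μ1 • x - μ2 • x by abel,
        ← sub_smul, smul_smul, inv_mul_cancel₀ (sub_ne_zero.mpr hμne), one_smul]
    rw [hxeq]
    apply Submodule.add_mem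
    · exact Submodule.smul_mem _ _ (le_iSup (fun μ => Module.End.eigenspace f μ) μ1 hx1)
    · exact Submodule.smul_mem _ _ (le_iSup (fun μ => Module.End.eigenspace f μ) μ2 hx2)
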